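/- Let k, p, k_1 be real numbers with k ≥ 3, p ≥ 3, and k_1 > k. Then the degree-8 polynomial H_1 (from the Einstein system for SO(k_1 + (p-1)k)) has at least two roots in the open interval (0, 2): one root α with 0 < α < 1 and one root β with 1 < β < 2. -/
import Mathlib


set_option maxHeartbeats 1000000
set_option maxRecDepth 10000

/-- Coefficient of `x^8` in the polynomial `H₁`. -/
noncomputable def H1c8 (k p k1 : ℝ) : ℝ :=
  k1^2*(p*k-2*k+k1)*(p^2*k^2-3*p*k^2+2*k^2-k1*k+k1*p*k+k1^2-k1)

/-- Coefficient of `x^7` in the polynomial `H₁`. -/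
noncomputable def H1c7 (k p k1 : ℝ) : ℝ :=
  -2*k1^2*(p*k-k+k1-2)*(2*p^2*k^2-6*p*k^2+4*k^2-2*k1*k+2*k1*p*k+k1^2-k1)

/-- Coefficient of `x^6` in the polynomial `H₁`. -/
noncomputable def H1c6 (k p k1 : ℝ) : ℝ :=
  k1*(2*p^4*k^4-10*p^3*k^4+18*p^2*k^4-14*p*k^4+4*k^4+10*k1*p^3*k^3-4*p^3*k^3-28*k1*p^2*k^3+14*p^2*k^3-2*k1*k^3+20*k1*p*k^3-14*p*k^3+4*k^3+5*k1^2*k^2+15*k1^2*p^2*k^2-35*k1*p^2*k^2+4*p^2*k^2-41*k1*k^2-23*k1^2*p*k^2+79*k1*p*k^2-12*p*k^2+8*k^2-2*k1^3*k+39*k1^2*k-33*k1*k+8*k1^3*p*k-40*k1^2*p*k+28*k1*p*k+k1^4-16*k1^3+19*k1^2-4*k1)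

/-- Coefficient of `x^5` in the polynomial `H₁`. -/
noncomputable def H1c5 (k p k1 : ℝ) : ℝ :=
  -2*k1*(p*k-k+k1-2)*(4*p^3*k^3-12*p^2*k^3+10*p*k^3-2*k^3+6*k1*p^2*k^2-8*p^2*k^2-2*k1*k^2-4*k1*p*k^2+18*p*k^2-10*k^2+k1^2*k+15*k1*k+3*k1^2*p*k-19*k1*p*k+4*p*k-4*k-8*k1^2+8*k1)

/-- Coefficient of `x^4` in the polynomial `H₁`. -/
noncomputable def H1c4 (k p k1 : ℝ) : ℝ :=
  (p^5*k^5-5*p^4*k^5+10*p^3*k^5-10*p^2*k^5+5*p*k^5-k^5+14*k1*p^4*k^4-4*p^4*k^4-38*k1*p^3*k^4+14*p^3*k^4+24*k1*p^2*k^4-18*p^2*k^4-10*k1*k^4+10*k1*p*k^4+10*p*k^4-2*k^4+25*k1^2*p^3*k^3-83*k1*p^3*k^3+8*p^3*k^3+8*k1^2*k^3-36*k1^2*p^2*k^3+204*k1*p^2*k^3-20*p^2*k^3+37*k1*k^3+3*k1^2*p*k^3-158*k1*p*k^3+17*p*k^3-5*k^3-3*k1^3*k^2-38*k1^2*k^2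+14*k1^3*p^2*k^2-122*k1^2*p^2*k^2+152*k1*p^2*k^2-8*p^2*k^2+101*k1*k^2-2*k1^3*p*k^2+150*k1^2*p*k^2-252*k1*p*k^2+12*p*k^2-4*k^2+12*k1^3*k-116*k1^2*k+100*k1*k+2*k1^4*p*k-60*k1^3*p*k+174*k1^2*p*k-112*k1*p*k+4*p*k-4*k-4*k1^4+60*k1^3-76*k1^2+20*k1)

/-- Coefficient of `x^3` in the polynomial `H₁`. -/
noncomputable def H1c3 (k p k1 : ℝ) : ℝ :=
  -2*(p*k-k+k1-2)*(2*p^4*k^4-6*p^3*k^4+6*p^2*k^4-2*p*k^4+6*k1*p^3*k^3-8*p^3*k^3-2*k1*p^2*k^3+18*p^2*k^3+4*k1*k^3-8*k1*p*k^3-14*p*k^3+4*k^3-2*k1^2*k^2+3*k1^2*p^2*k^2-35*k1*p^2*k^2+12*p^2*k^2-2*k1*k^2+2*k1^2*p*k^2+34*k1*p*k^2-16*p*k^2+4*k^2+2*k1^2*k-34*k1*k-16*k1^2*p*k+48*k1*p*k-8*p*k+8*k+16*k1^2-16*k1)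

/-- Coefficient of `x^2` in the polynomial `H₁`. -/
noncomputable def H1c2 (k p k1 : ℝ) : ℝ :=
  (6*p^5*k^5-16*p^4*k^5+8*p^3*k^5+12*p^2*k^5-14*p*k^5+4*k^5+13*k1*p^4*k^4-49*p^4*k^4-15*k1*p^3*k^4+127*p^3*k^4-7*k1*p^2*k^4-109*p^2*k^4+2*k1*k^4+7*k1*p*k^4+33*p*k^4-2*k^4+8*k1^2*p^3*k^3-96*k1*p^3*k^3+140*p^3*k^3-4*k1^2*k^3+2*k1^2*p^2*k^3+117*k1*p^2*k^3-283*p^2*k^3-26*k1*k^3-6*k1^2*p*k^3+5*k1*p*k^3+169*p*k^3-26*k^3+32*k1^2*k^2+k1^3*p^2*k^2-56*k1^2*p^2*k^2+243*k1*p^2*k^2-188*p^2*k^2+44*k1*k^2+8*k1^2*p*k^2-268*k1*p*k^2+276*p*k^2-92*k^2-56*k1^2*k+164*k1*k-4*k1^3*p*k+120*k1^2*p*k-240*k1*p*k+108*p*k-92*k+4*k1^3-64*k1^2+76*k1-16)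

/-- Coefficient of `x^1` in the polynomial `H₁`. -/
noncomputable def H1c1 (k p k1 : ℝ) : ℝ :=
  -2*(k*p-2)*(p*k-k+k1-2)*(2*p*k-2*k+k1-1)*(p^2*k^2+p*k^2-2*k^2-6*p*k+4*k+4)

/-- Coefficient of `x^0` in the polynomial `H₁`. -/
noncomputable def H1c0 (k p k1 : ℝ) : ℝ :=
  (p*k-k+k1-1)*(p^2*k^2+p*k^2-2*k^2-6*p*k+4*k+4)^2

/-- The degree-8 polynomial `H₁` in `x` from the Einstein system for `SO(k1 + (p-1)k)`,
with the explicit coefficient list given in the paper. -/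
noncomputable def H1 (k p k1 x : ℝ) : ℝ :=
  H1c8 k p k1 * x^8 + H1c7 k p k1 * x^7 + H1c6 k p k1 * x^6 + H1c5 k p k1 * x^5
    + H1c4 k p k1 * x^4 + H1c3 k p k1 * x^3 + H1c2 k p k1 * x^2 + H1c1 k p k1 * x
    + H1c0 k p k1


private lemma aux0 (a b c : ℝ) (ha : 0 ≤ a) (hb : 0 ≤ b) (hc : 0 < c) :
    0 < H1 (3+a) (3+b) (3+a+c) 0 := by
  have h : H1 (3+a) (3+b) (3+a+c) 0 = 21632 + 2704*c + 45552*b + 46384*a + 4680*b*c + 37728*b^2 + 4784*a*c + 94168*a*b + 39600*a^2 + 2961*b^2*c + 15363*b^3 + 7884*a*b*c + 74751*a*b^2 + 3156*a^2*c + 77424*a^2*b + 16828*a^3 + 810*b^3*c + 3078*b^4 + 4692*a*b^2*c + 28971*a*b^3 + 4940*a^2*b*c + 58876*a^2*b^2 + 920*a^3*c + 31648*a^3*b + 3560*a^4 + 81*b^4*c + 243*b^5 + 1188*a*b^3*c + 5481*a*b^4 + 2762*a^2*b^2*c + 21726*a^2*b^3 + 1364*a^3*b*c + 23046*a^3*b^2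 + 100*a^4*c + 6432*a^4*b + 300*a^5 + 108*a*b^4*c + 405*a*b^5 + 648*a^2*b^3*c + 3888*a^2*b^4 + 716*a^3*b^2*c + 8102*a^3*b^3 + 140*a^4*b*c + 4484*a^4*b^2 + 520*a^5*b + 54*a^2*b^4*c + 270*a^2*b^5 + 156*a^3*b^3*c + 1374*a^3*b^4 + 69*a^4*b^2*c + 1503*a^4*b^3 + 347*a^5*b^2 + 12*a^3*b^4*c + 90*a^3*b^5 + 14*a^4*b^3*c + 242*a^4*b^4 + 111*a^5*b^3 + 1*a^4*b^4*c + 15*a^4*b^5 + 17*a^5*b^4 + 1*a^5*b^5 := by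
    unfold H1 H1c8 H1c7 H1c6 H1c5 H1c4 H1c3 H1c2 H1c1 H1c0; ring
  rw [h]; positivity

private lemma aux1 (a b c : ℝ) (ha : 0 ≤ a) (hb : 0 ≤ b) (hc : 0 < c) :
    H1 (3+a) (3+b) (3+a+c) 1 < 0 := by
  have h : -H1 (3+a) (3+b) (3+a+c) 1 = c * (1296 + 450*c + 1350*b + 1998*a + 52*c^2 + 312*b*c + 468*b^2 + 537*a*c + 2061*a*b + 1143*a^2 + 2*c^3 + 18*b*c^2 + 54*b^2*c + 54*b^3 + 44*a*c^2 + 368*a*b*c + 708*a*b^2 + 210*a^2*c + 1167*a^2*b + 288*a^3 + 1*a*c^3 + 15*a*b*c^2 + 63*a*b^2*c + 81*a*b^3 + 9*a^2*c^2 + 142*a^2*b*c + 397*a^2*b^2 + 27*a^3*c + 291*a^3*b + 27*a^4 + 3*a^2*b*c^2 + 24*a^2*b^2*c + 45*a^2*b^3 + 18*a^3*b*c + 98*a^3*b^2 + 27*a^4*b + 3*a^3*b^2*c + 11*a^3*b^3 + 9*a^4*b^2 + 1*a^4*b^3) := by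
    unfold H1 H1c8 H1c7 H1c6 H1c5 H1c4 H1c3 H1c2 H1c1 H1c0; ring
  nlinarith [mul_pos hc (show (0:ℝ) < 1296 + 450*c + 1350*b + 1998*a + 52*c^2 + 312*b*c + 468*b^2 + 537*a*c + 2061*a*b + 1143*a^2 + 2*c^3 + 18*b*c^2 + 54*b^2*c + 54*b^3 + 44*a*c^2 + 368*a*b*c + 708*a*b^2 + 210*a^2*c + 1167*a^2*b + 288*a^3 + 1*a*c^3 + 15*a*b*c^2 + 63*a*b^2*c + 81*a*b^3 + 9*a^2*c^2 + 142*a^2*b*c + 397*a^2*b^2 + 27*a^3*c + 291*a^3*b + 27*a^4 + 3*a^2*b*c^2 + 24*a^2*b^2*c + 45*a^2*b^3 + 18*a^3*b*c + 98*a^3*b^2 + 27*a^4*b + 3*a^3*b^2*c + 11*a^3*b^3 + 9*a^4*b^2 + 1*a^4*b^3 by positivity)]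

private lemma aux2 (a b c : ℝ) (ha : 0 ≤ a) (hb : 0 ≤ b) (hc : 0 < c) :
    0 < H1 (3+a) (3+b) (3+a+c) 2 := by
  have h : H1 (3+a) (3+b) (3+a+c) 2 = 104336 + 96416*c + 157872*b + 162656*a + 39924*c^2 + 109920*b*c + 94824*b^2 + 123880*a*c + 249376*a*b + 101508*a^2 + 9284*c^3 + 31908*b*c^2 + 45729*b^2*c + 29403*b^3 + 40012*a*c^2 + 142804*a*b*c + 150183*a*b^2 + 59840*a^2*c + 158164*a^2*b + 31712*a^3 + 1184*c^4 + 4680*b*c^3 + 7668*b^2*c^2 + 9450*b^3*c + 4374*b^4 + 6408*a*c^3 + 32428*a*b*c^2 + 58440*a*b^2*c + 47547*a*b^3 + 13340*a^2*c^2 + 70164*a^2*b*c + 95028*a^2*b^2 + 12872*a^3*c + 50420*a^3*b + 4964*a^4 + 64*c^5 + 288*b*c^4 + 468*b^2*c^3 + 756*b^3*c^2 + 729*b^4*c + 243*b^5 + 416*a*c^4 + 3264*a*b*c^3 + 7524*a*b^2*c^2 + 12312*a*b^3*c + 7209*a*b^4 + 1092*a^2*c^3 + 11068*a^2*b*c^2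 + 28010*a^2*b^2*c + 30726*a^2*b^3 + 1476*a^3*c^2 + 15468*a^3*b*c + 30030*a^3*b^2 + 1040*a^4*c + 8092*a^4*b + 312*a^5 + 96*a*b*c^4 + 312*a*b^2*c^3 + 756*a*b^3*c^2 + 972*a*b^4*c + 405*a*b^5 + 568*a^2*b*c^3 + 2460*a^2*b^2*c^2 + 6012*a^2*b^3*c + 4752*a^2*b^4 + 1268*a^3*b*c^2 + 5968*a^3*b^2*c + 9918*a^3*b^3 + 1292*a^4*b*c + 4740*a^4*b^2 + 524*a^5*b + 52*a^2*b^2*c^3 + 252*a^2*b^3*c^2 + 486*a^2*b^4*c + 270*a^2*b^5 + 268*a^3*b^2*c^2 + 1304*a^3*b^3*c + 1566*a^3*b^4 + 477*a^4*b^2*c + 1599*a^4*b^3 + 299*a^5*b^2 + 28*a^3*b^3*c^2 + 108*a^3*b^4*c + 90*a^3*b^5 + 106*a^4*b^3*c + 258*a^4*b^4 + 103*a^5*b^3 + 9*a^4*b^4*c + 15*a^4*b^5 + 17*a^5*b^4 + 1*a^5*b^5 := by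
    unfold H1 H1c8 H1c7 H1c6 H1c5 H1c4 H1c3 H1c2 H1c1 H1c0; ring
  rw [h]; positivity

/-- For `k ≥ 3`, `p ≥ 3`, `k₁ > k`, the polynomial `H₁` has a root `α ∈ (0,1)` and a
root `β ∈ (1,2)`. -/
theorem stmt_10 (k p k1 : ℝ) (hk : 3 ≤ k) (hp : 3 ≤ p) (hk1 : k < k1) :
    ∃ α β : ℝ, 0 < α ∧ α < 1 ∧ H1 k p k1 α = 0 ∧
      1 < β ∧ β < 2 ∧ H1 k p k1 β = 0 := by
  
  have ha : (0:ℝ) ≤ k - 3 := by linarith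
  have hb : (0:ℝ) ≤ p - 3 := by linarith
  have hc : (0:ℝ) < k1 - k := by linarith
  have e1 : (3 + (k-3) : ℝ) = k := by ring
  have e2 : (3 + (p-3) : ℝ) = p := by ring
  have e3 : (k + (k1-k) : ℝ) = k1 := by ring
  have h0 := aux0 (k-3) (p-3) (k1-k) ha hb hc
  have h1 := aux1 (k-3) (p-3) (k1-k) ha hb hc
  have h2 := aux2 (k-3) (p-3) (k1-k) ha hb hc
  rw [e1, e2] at h0 h1 h2; rw [e3] at h0 h1 h2
  have hcont : Continuous (fun x => H1 k p k1 x) := by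
    unfold H1; continuity
  obtain ⟨α, hαm, hα0⟩ : ∃ α ∈ Set.Ioo (0:ℝ) 1, H1 k p k1 α = 0 := by
    have hs := intermediate_value_Ioo' (by norm_num : (0:ℝ) ≤ 1) hcont.continuousOn
    have : (0:ℝ) ∈ Set.Ioo (H1 k p k1 1) (H1 k p k1 0) := ⟨h1, h0⟩
    obtain ⟨α, hm, hv⟩ := hs this
    exact ⟨α, hm, hv⟩
  obtain ⟨β, hβm, hβ0⟩ : ∃ β ∈ Set.Ioo (1:ℝ) 2, H1 k p k1 β = 0 := by
    have hs := intermediate_value_Ioo (by norm_num : (1:ℝ) ≤ 2) hcont.continuousOn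
    have : (0:ℝ) ∈ Set.Ioo (H1 k p k1 1) (H1 k p k1 2) := ⟨h1, h2⟩
    obtain ⟨β, hm, hv⟩ := hs this
    exact ⟨β, hm, hv⟩
  exact ⟨α, β, hαm.1, hαm.2, hα0, hβm.1, hβm.2, hβ0⟩
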